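/- arXiv:2005.13484 — 4 statements merged into one kernel-verified Lean document; each statement's English description precedes it below -/
import Mathlib

section
/- Let B be a commutative Noetherian ring, M a finitely generated B-module, and φ : M → M a B-linear automorphism. Then φ satisfies a monic polynomial f(X) ∈ B[X] whose constant term is a unit in B. -/
open Polynomial Finset

/-- Let `B` be a commutative Noetherian ring, `M` a finitely generated `B`-module, and
`φ : M → M` a `B`-linear automorphism. Then `φ` satisfies a monic polynomial
`f ∈ B[X]` whose constant term is a unit in `B`. -/
theorem monic_poly_unit_constant_of_bijective_endo
    (B : Type*) [CommRing B] [IsNoetherianRing B]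
    (M : Type*) [AddCommGroup M] [Module B M] [Module.Finite B M]
    (φ : M →ₗ[B] M) (hφ : Function.Bijective φ) :
    ∃ f : Polynomial B, f.Monic ∧ IsUnit (f.coeff 0) ∧
      Polynomial.aeval (φ : Module.End B M) f = 0 := by
  rcases subsingleton_or_nontrivial B with hB | hB
  · haveI := Module.subsingleton B M
    exact ⟨X, Subsingleton.elim _ _, isUnit_of_subsingleton _, Subsingleton.elim _ _⟩
  have hU : IsUnit (φ : Module.End B M) := (Module.End.isUnit_iff φ).mpr hφ
  obtain ⟨u, hu⟩ := hU
  set ψ : Module.End B M := ↑u⁻¹ with hψ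
  obtain ⟨g, hg_monic, hg0⟩ := LinearMap.exists_monic_and_aeval_eq_zero B ψ
  set d := g.natDegree with hd
  -- the "reversed" polynomial
  set h : Polynomial B := ∑ i ∈ range (d + 1), C (g.coeff (d - i)) * X ^ i with hh
  have hdegh : h.degree ≤ d := by
    apply Polynomial.degree_sum_le _ _ |>.trans
    apply Finset.sup_le
    intro i hi
    refine (Polynomial.degree_C_mul_X_pow_le _ _).trans ?_
    exact_mod_cast Nat.cast_le.mpr (Nat.lt_succ_iff.mp (mem_range.mp hi))
  have hh0 : h.coeff 0 = 1 := by
    rw [hh, Polynomial.finset_sum_coeff]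
    rw [Finset.sum_eq_single 0]
    · simpa [hd] using hg_monic.coeff_natDegree
    · intro i _ hi
      simp [Polynomial.coeff_X_pow, eq_comm, hi]
    · simp
  have hφψ : ∀ j ≤ d, (φ : Module.End B M) ^ d * ψ ^ j = (φ : Module.End B M) ^ (d - j) := by
    intro j hj
    rw [← hu, hψ, ← Units.val_pow_eq_pow_val, ← Units.val_pow_eq_pow_val,
      ← Units.val_pow_eq_pow_val, ← Units.val_mul]
    congr 1
    have h1 : u ^ d = u ^ (d - j) * u ^ j := by rw [← pow_add]; congr 1; omega
    rw [h1, mul_assoc, inv_pow]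
    simp
  have haevalh : Polynomial.aeval (φ : Module.End B M) h = 0 := by
    have key : Polynomial.aeval (φ : Module.End B M) h
        = (φ : Module.End B M) ^ d * Polynomial.aeval ψ g := by
      rw [hh, map_sum, Polynomial.aeval_eq_sum_range (p := g) ψ, Finset.mul_sum, ← hd]
      rw [← Finset.sum_range_reflect (fun j => (φ : Module.End B M) ^ d * (g.coeff j • ψ ^ j))
        (d + 1)]
      apply Finset.sum_congr rfl
      intro i hi
      have hi' : i ≤ d := Nat.lt_succ_iff.mp (mem_range.mp hi)
      have : d + 1 - 1 - i = d - i := by omega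
      rw [this, mul_smul_comm, hφψ (d - i) (Nat.sub_le _ _), Nat.sub_sub_self hi']
      simp [Algebra.smul_def]
    rw [key, hg0, mul_zero]
  obtain ⟨p, hp_monic, hp0⟩ := LinearMap.exists_monic_and_aeval_eq_zero B (φ : Module.End B M)
  refine ⟨X ^ (d + 1) * p + h, ?_, ?_, ?_⟩
  · apply Polynomial.Monic.add_of_left ((Polynomial.monic_X_pow _).mul hp_monic)
    have hne : (X ^ (d + 1) * p) ≠ 0 := ((Polynomial.monic_X_pow _).mul hp_monic).ne_zero
    have hdeg : (X ^ (d + 1) * p).degree = ((d + 1 + p.natDegree : ℕ) : WithBot ℕ) := by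
      rw [Polynomial.degree_eq_natDegree hne,
        (Polynomial.monic_X_pow (d + 1)).natDegree_mul hp_monic,
        Polynomial.natDegree_X_pow]
    rw [hdeg]
    exact lt_of_le_of_lt hdegh (by exact_mod_cast by omega)
  · rw [Polynomial.coeff_add, Polynomial.mul_coeff_zero, hh0]
    simp
  · rw [map_add, map_mul, map_pow, Polynomial.aeval_X, hp0, mul_zero, zero_add, haevalh]
end

section
/- Let G = GL_n over a field F, let P_n be the mirabolic subgroup (matrices with last row (0,...,0,1)), N_n the upper triangular unipotent subgroup, Z_n the center, and w_n the antidiagonal permutation matrix. Set w_{n,n-m} = diag(I_n's appropriate block, w_{n-m}) ∈ GL_n. Then GL_n(F) = Z_n P_n ⊔ ⊔_{m=1}^{n-1} N_n w_n w_{n,n-m} Z_n P_n, i.e., these double cosets are pairwise disjoint and cover GL_n(F). (Chen's decomposition.) -/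
open Matrix

variable (F : Type*) [Field F] (n : ℕ) [NeZero n]

/-- The last index of `Fin n`. -/
def lastIdx : Fin n := ⟨n - 1, by have := Nat.pos_of_ne_zero (NeZero.ne n); omega⟩

/-- The mirabolic subgroup `P_n`: invertible matrices whose last row is `(0,…,0,1)`. -/
def mirabolicSet : Set (GL (Fin n) F) :=
  {g | ∀ j : Fin n,
    (g : Matrix (Fin n) (Fin n) F) (lastIdx n) j = if j = lastIdx n then 1 else 0}

/-- The subgroup `N_n` of upper triangular unipotent matrices. -/
def upperUnipSet : Set (GL (Fin n) F) :=
  {g | (∀ i j : Fin n, j < i → (g : Matrix (Fin n) (Fin n) F) i j = 0) ∧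
    ∀ i : Fin n, (g : Matrix (Fin n) (Fin n) F) i i = 1}

/-- The center `Z_n` of `GL_n(F)`: nonzero scalar matrices. -/
def centerSet : Set (GL (Fin n) F) :=
  {g | ∃ c : Fˣ, (g : Matrix (Fin n) (Fin n) F) = (c : F) • (1 : Matrix (Fin n) (Fin n) F)}

/-- The antidiagonal permutation matrix `w_n`. -/
def wAnti : Matrix (Fin n) (Fin n) F :=
  Matrix.of fun i j => if (i : ℕ) + (j : ℕ) = n - 1 then 1 else 0

/-- The block matrix `w_{m,n-m} = diag(I_m, w_{n-m})`. -/
def wBlockMat (m : ℕ) : Matrix (Fin n) (Fin n) F :=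
  Matrix.of fun i j =>
    if (i : ℕ) < m then (if i = j then 1 else 0)
    else if (i : ℕ) + (j : ℕ) = n + m - 1 then 1 else 0

/-- The cell `Z_n P_n`. -/
def cellZero : Set (GL (Fin n) F) :=
  {g | ∃ z ∈ centerSet F n, ∃ p ∈ mirabolicSet F n, g = z * p}

/-- The cell `N_n w_n w_{m,n-m} Z_n P_n`, described at the level of underlying matrices. -/
def cellMid (m : ℕ) : Set (GL (Fin n) F) :=
  {g | ∃ u ∈ upperUnipSet F n, ∃ z ∈ centerSet F n, ∃ p ∈ mirabolicSet F n,
    (g : Matrix (Fin n) (Fin n) F) =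
      (u : Matrix (Fin n) (Fin n) F) * wAnti F n * wBlockMat F n m *
        (z : Matrix (Fin n) (Fin n) F) * (p : Matrix (Fin n) (Fin n) F)}

namespace Chen

set_option linter.unusedSectionVars false
set_option linter.unusedVariables false

variable {F : Type*} [Field F] {n : ℕ} [NeZero n]

lemma npos : 0 < n := Nat.pos_of_ne_zero (NeZero.ne n)

lemma vecMul_apply (v : Fin n → F) (U : Matrix (Fin n) (Fin n) F) (j : Fin n) :
    (v ᵥ* U) j = ∑ k, v k * U k j := rfl

/-- the permutation underlying `w_n * w_{m,n-m}` (ℕ-valued). -/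
def sig (n m : ℕ) (i : ℕ) : ℕ := if i + m ≤ n - 1 then i + m else n - 1 - i

lemma sig_lt (m : ℕ) (i : Fin n) : sig n m (i : ℕ) < n := by
  have := i.isLt; unfold sig; split_ifs <;> omega

lemma sig_inj {m : ℕ} {i j : Fin n} (h : sig n m (i:ℕ) = sig n m (j:ℕ)) : i = j := by
  have hi := i.isLt; have hj := j.isLt
  unfold sig at h; apply Fin.ext; split_ifs at h <;> omega

/-- inverse permutation -/
def tau (n m : ℕ) (j : ℕ) : ℕ := if m ≤ j then j - m else n - 1 - j

lemma tau_lt (m : ℕ) (hm1 : 1 ≤ m) (j : Fin n) : tau n m (j : ℕ) < n := by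
  have := j.isLt; unfold tau; split_ifs <;> omega

lemma sig_tau {m : ℕ} (hm1 : 1 ≤ m) (hm2 : m ≤ n - 1) (j : Fin n) :
    sig n m (tau n m (j : ℕ)) = (j : ℕ) := by
  have := j.isLt; unfold sig tau; split_ifs <;> omega

lemma WB_apply {m : ℕ} (hm1 : 1 ≤ m) (hm2 : m ≤ n - 1) (i j : Fin n) :
    (wAnti F n * wBlockMat F n m) i j = if (j : ℕ) = sig n m (i : ℕ) then 1 else 0 := by
  have hi := i.isLt; have hj := j.isLt
  rw [Matrix.mul_apply]
  rw [Finset.sum_eq_single (⟨n - 1 - (i : ℕ), by omega⟩ : Fin n)]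
  · simp only [wAnti, wBlockMat, Matrix.of_apply, sig, Fin.ext_iff, Fin.val_mk]
    rw [if_pos (by omega), one_mul]
    split_ifs <;> first | rfl | omega
  · intro k _ hk
    simp only [wAnti, Matrix.of_apply]
    rw [if_neg, zero_mul]
    intro h; apply hk; apply Fin.ext; simp only [Fin.val_mk]; omega
  · intro h; exact absurd (Finset.mem_univ _) h

lemma WB_mul_transpose {m : ℕ} (hm1 : 1 ≤ m) (hm2 : m ≤ n - 1) :
    (wAnti F n * wBlockMat F n m) * (wAnti F n * wBlockMat F n m)ᵀ = 1 := by
  ext i j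
  rw [Matrix.mul_apply]
  have hs := sig_lt (n := n) m i
  rw [Finset.sum_eq_single (⟨sig n m (i : ℕ), hs⟩ : Fin n)]
  · rw [Matrix.transpose_apply, WB_apply hm1 hm2, WB_apply hm1 hm2]
    simp only [Fin.val_mk, Matrix.one_apply]
    by_cases hij : i = j
    · simp [hij]
    · have hs2 : sig n m (i:ℕ) ≠ sig n m (j:ℕ) := fun h => hij (sig_inj h)
      simp [hij, hs2]
  · intro k _ hk
    rw [Matrix.transpose_apply, WB_apply hm1 hm2, WB_apply hm1 hm2]
    rw [if_neg, zero_mul]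
    intro h; apply hk; apply Fin.ext; simp only [Fin.val_mk]; omega
  · intro h; exact absurd (Finset.mem_univ _) h

lemma transpose_mul_WB {m : ℕ} (hm1 : 1 ≤ m) (hm2 : m ≤ n - 1) :
    (wAnti F n * wBlockMat F n m)ᵀ * (wAnti F n * wBlockMat F n m) = 1 := by
  ext i j
  rw [Matrix.mul_apply]
  rw [Finset.sum_eq_single (⟨tau n m (j : ℕ), tau_lt m hm1 j⟩ : Fin n)]
  · rw [Matrix.transpose_apply, WB_apply hm1 hm2, WB_apply hm1 hm2]
    have h2 : sig n m ((⟨tau n m (j:ℕ), tau_lt m hm1 j⟩ : Fin n) : ℕ) = (j:ℕ) :=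
      sig_tau hm1 hm2 j
    rw [h2]
    simp only [Matrix.one_apply]
    by_cases hij : i = j
    · simp [hij]
    · have : (i : ℕ) ≠ (j : ℕ) := fun h => hij (Fin.ext h)
      simp [hij, this]
  · intro k _ hk
    rw [Matrix.transpose_apply, WB_apply hm1 hm2, WB_apply hm1 hm2]
    have : ¬ ((j:ℕ) = sig n m (k:ℕ)) := by
      intro h; apply hk; apply sig_inj
      show sig n m (k:ℕ) = sig n m ((⟨tau n m (j:ℕ), tau_lt m hm1 j⟩ : Fin n) : ℕ)
      rw [sig_tau hm1 hm2 j]; exact h.symm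
    rw [if_neg this, mul_zero]
  · intro h; exact absurd (Finset.mem_univ _) h

/-- column `lastIdx` of `W*B`. -/
lemma WB_col_last {m : ℕ} (hm1 : 1 ≤ m) (hm2 : m ≤ n - 1) (j : Fin n) :
    (wAnti F n * wBlockMat F n m) j (lastIdx n) =
      if (j : ℕ) = n - 1 - m then 1 else 0 := by
  rw [WB_apply hm1 hm2]
  have hj := j.isLt
  have hL : ((lastIdx n : Fin n) : ℕ) = n - 1 := rfl
  simp only [hL, sig]
  split_ifs <;> first | rfl | omega

/-- elementary matrix supported in row `t`, columns `> t` -/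
def elemA (t : Fin n) (a : Fin n → F) : Matrix (Fin n) (Fin n) F :=
  Matrix.of fun i j => if i = t ∧ t < j then a j else 0

lemma elemA_mul_elemA (t : Fin n) (a b : Fin n → F) : elemA t a * elemA t b = 0 := by
  ext i j
  rw [Matrix.mul_apply]
  refine Finset.sum_eq_zero (fun k _ => ?_) |>.trans rfl |>.trans (Matrix.zero_apply i j).symm
  simp only [elemA, Matrix.of_apply]
  split_ifs with h1 h2 <;> try simp
  exact absurd h2.1 (by rintro rfl; exact lt_irrefl _ h1.2)

lemma elemA_add (t : Fin n) (a b : Fin n → F) :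
    elemA t a + elemA t b = elemA t (a + b) := by
  ext i j; simp only [elemA, Matrix.of_apply, Matrix.add_apply, Pi.add_apply]
  split_ifs <;> simp

lemma elemA_zero (t : Fin n) : elemA t (0 : Fin n → F) = 0 := by
  ext i j; simp only [elemA, Matrix.of_apply, Pi.zero_apply, Matrix.zero_apply]
  split_ifs <;> rfl

lemma one_add_elemA_mul (t : Fin n) (a b : Fin n → F) :
    (1 + elemA t a) * (1 + elemA t b) = 1 + elemA t (a + b) := by
  rw [mul_add, mul_one, add_mul, one_mul, elemA_mul_elemA, add_zero, add_assoc, elemA_add]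

/-- the unit `1 + elemA t a` -/
def rowAddUnit (t : Fin n) (a : Fin n → F) : GL (Fin n) F :=
  ⟨1 + elemA t a, 1 + elemA t (-a),
    by rw [one_add_elemA_mul, add_neg_cancel, elemA_zero, add_zero],
    by rw [one_add_elemA_mul, neg_add_cancel, elemA_zero, add_zero]⟩

lemma rowAddUnit_coe (t : Fin n) (a : Fin n → F) :
    (rowAddUnit t a : Matrix (Fin n) (Fin n) F) = 1 + elemA t a := rfl

lemma rowAddUnit_mem (t : Fin n) (a : Fin n → F) :
    rowAddUnit t a ∈ upperUnipSet F n := by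
  constructor
  · intro i j hji
    rw [rowAddUnit_coe, Matrix.add_apply, Matrix.one_apply,
      if_neg (by rintro rfl; exact lt_irrefl _ hji)]
    simp only [elemA, Matrix.of_apply]
    rw [if_neg, add_zero]
    rintro ⟨rfl, h2⟩; exact absurd (h2.trans hji) (lt_irrefl _)
  · intro i
    rw [rowAddUnit_coe, Matrix.add_apply, Matrix.one_apply, if_pos rfl]
    simp only [elemA, Matrix.of_apply]
    rw [if_neg, add_zero]
    rintro ⟨rfl, h2⟩; exact absurd h2 (lt_irrefl _)

lemma vecMul_rowAddUnit (t : Fin n) (a : Fin n → F) (v : Fin n → F) (j : Fin n) :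
    (v ᵥ* (rowAddUnit t a : Matrix (Fin n) (Fin n) F)) j
      = v j + v t * (if t < j then a j else 0) := by
  rw [rowAddUnit_coe, Matrix.vecMul_add, Matrix.vecMul_one, Pi.add_apply]
  congr 1
  show (v ᵥ* elemA t a) j = _
  unfold Matrix.vecMul dotProduct
  rw [Finset.sum_eq_single t]
  · simp only [elemA, Matrix.of_apply, true_and]
  · intro k _ hk
    simp only [elemA, Matrix.of_apply]
    rw [if_neg (fun h => hk h.1), mul_zero]
  · intro h; exact absurd (Finset.mem_univ _) h

/-- row `j` of `v ᵥ* U`, for a unipotent upper triangular `U`, when `v` vanishes below `j`. -/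
lemma vecMul_unip_apply {U : Matrix (Fin n) (Fin n) F}
    (hU1 : ∀ i j : Fin n, j < i → U i j = 0) (hU2 : ∀ i : Fin n, U i i = 1)
    {v : Fin n → F} {j : Fin n} (h : ∀ i, i < j → v i = 0) :
    (v ᵥ* U) j = v j := by
  rw [vecMul_apply]
  rw [Finset.sum_eq_single j]
  · rw [hU2, mul_one]
  · intro k _ hk
    rcases lt_or_gt_of_ne hk with hlt | hgt
    · rw [h k hlt, zero_mul]
    · rw [hU1 k j hgt, mul_zero]
  · intro h; exact absurd (Finset.mem_univ _) h

/-- the key triangularity argument: if `v ᵥ* U` is supported at `t` then `v` vanishes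
below `t` and agrees with `v ᵥ* U` at `t`. -/
lemma vecMul_unip_support {U : Matrix (Fin n) (Fin n) F}
    (hU1 : ∀ i j : Fin n, j < i → U i j = 0) (hU2 : ∀ i : Fin n, U i i = 1)
    {v : Fin n → F} {t : Fin n} (h : ∀ j, j ≠ t → (v ᵥ* U) j = 0) :
    (∀ j, j < t → v j = 0) ∧ v t = (v ᵥ* U) t := by
  have key : ∀ k : ℕ, ∀ j : Fin n, (j : ℕ) = k → j < t → v j = 0 := by
    intro k
    induction k using Nat.strong_induction_on with
    | _ k ih =>
      intro j hjk hjt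
      have hz : ∀ i, i < j → v i = 0 := fun i hij =>
        ih (i : ℕ) (hjk ▸ hij) i rfl (hij.trans hjt)
      rw [← vecMul_unip_apply hU1 hU2 hz]
      exact h j (ne_of_lt hjt)
  exact ⟨fun j => key (j : ℕ) j rfl,
    (vecMul_unip_apply hU1 hU2 (fun i hit => key (i : ℕ) i rfl hit)).symm⟩

/-- vecMul of the last-row of the inverse against `g` gives the last standard basis vector. -/
lemma inv_row_vecMul (g : GL (Fin n) F) :
    ((g⁻¹ : GL (Fin n) F) : Matrix (Fin n) (Fin n) F) (lastIdx n) ᵥ*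
      (g : Matrix (Fin n) (Fin n) F) = Pi.single (lastIdx n) 1 := by
  have h : ((g⁻¹ : GL (Fin n) F) : Matrix (Fin n) (Fin n) F) * g = 1 := Units.inv_mul g
  funext j
  have h2 := congrFun (congrFun h (lastIdx n)) j
  rw [Matrix.mul_apply] at h2
  rw [vecMul_apply, h2, Matrix.one_apply, Pi.single_apply]
  simp [eq_comm]

lemma mirabolic_row {p : GL (Fin n) F} (hp : p ∈ mirabolicSet F n) :
    (p : Matrix (Fin n) (Fin n) F) (lastIdx n) = Pi.single (lastIdx n) 1 := by
  funext j; rw [hp j, Pi.single_apply]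

lemma single_vecMul_mirabolic {p : GL (Fin n) F} (hp : p ∈ mirabolicSet F n) :
    Pi.single (lastIdx n) (1 : F) ᵥ* (p : Matrix (Fin n) (Fin n) F) =
      Pi.single (lastIdx n) 1 := by
  rw [Matrix.single_one_vecMul, Matrix.row, mirabolic_row hp]

lemma single_vecMul_mirabolic_inv {p : GL (Fin n) F} (hp : p ∈ mirabolicSet F n) :
    Pi.single (lastIdx n) (1 : F) ᵥ* ((p⁻¹ : GL (Fin n) F) : Matrix (Fin n) (Fin n) F) =
      Pi.single (lastIdx n) 1 := by
  conv_lhs => rw [← single_vecMul_mirabolic hp]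
  rw [Matrix.vecMul_vecMul, Units.mul_inv, Matrix.vecMul_one]

lemma center_inv_coe {z : GL (Fin n) F} {c : Fˣ}
    (h : (z : Matrix (Fin n) (Fin n) F) = (c : F) • 1) :
    ((z⁻¹ : GL (Fin n) F) : Matrix (Fin n) (Fin n) F) = ((c : F)⁻¹ : F) • 1 := by
  have h2 : (z : Matrix (Fin n) (Fin n) F) * (((c : F)⁻¹ : F) • 1) = 1 := by
    rw [h, Matrix.smul_mul, Matrix.mul_smul, smul_smul, mul_one,
      mul_inv_cancel₀ (Units.ne_zero c), one_smul]
  calc ((z⁻¹ : GL (Fin n) F) : Matrix (Fin n) (Fin n) F)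
      = ((z⁻¹ : GL (Fin n) F) : Matrix (Fin n) (Fin n) F) *
        ((z : Matrix (Fin n) (Fin n) F) * (((c : F)⁻¹ : F) • 1)) := by rw [h2, mul_one]
    _ = (((z⁻¹ : GL (Fin n) F) : Matrix (Fin n) (Fin n) F) * z) * (((c : F)⁻¹ : F) • 1) := by
        rw [mul_assoc]
    _ = ((c : F)⁻¹ : F) • 1 := by rw [Units.inv_mul, one_mul]

lemma vecMul_smul_one (v : Fin n → F) (c : F) :
    v ᵥ* ((c : F) • (1 : Matrix (Fin n) (Fin n) F)) = c • v := by
  funext j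
  rw [Matrix.smul_one_eq_diagonal, Matrix.vecMul_diagonal]
  simp [mul_comm]



/-- invariant for the zero cell: last row of `g⁻¹` is supported at `lastIdx`. -/
lemma cellZero_inv_row {g : GL (Fin n) F} (hg : g ∈ cellZero F n) :
    ∀ j : Fin n, j ≠ lastIdx n →
      ((g⁻¹ : GL (Fin n) F) : Matrix (Fin n) (Fin n) F) (lastIdx n) j = 0 := by
  obtain ⟨z, ⟨c, hc⟩, p, hp, rfl⟩ := hg
  intro j hj
  have h1 : (((z * p)⁻¹ : GL (Fin n) F) : Matrix (Fin n) (Fin n) F) (lastIdx n)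
      = Pi.single (lastIdx n) (1:F) ᵥ*
        (((z * p)⁻¹ : GL (Fin n) F) : Matrix (Fin n) (Fin n) F) := by
    rw [Matrix.single_one_vecMul, Matrix.row]
  rw [h1]
  have h2 : ((z * p)⁻¹ : GL (Fin n) F) = p⁻¹ * z⁻¹ := by rw [_root_.mul_inv_rev]
  rw [h2, Units.val_mul, ← Matrix.vecMul_vecMul, single_vecMul_mirabolic_inv hp,
    center_inv_coe hc, vecMul_smul_one, Pi.smul_apply, Pi.single_apply, if_neg hj,
    smul_zero]

/-- invariant for the middle cells. -/
lemma cellMid_inv_row {g : GL (Fin n) F} {m : ℕ} (hm1 : 1 ≤ m) (hm2 : m ≤ n - 1)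
    (hg : g ∈ cellMid F n m) :
    (∀ j : Fin n, (j : ℕ) < n - 1 - m →
        ((g⁻¹ : GL (Fin n) F) : Matrix (Fin n) (Fin n) F) (lastIdx n) j = 0) ∧
      (∀ j : Fin n, (j : ℕ) = n - 1 - m →
        ((g⁻¹ : GL (Fin n) F) : Matrix (Fin n) (Fin n) F) (lastIdx n) j ≠ 0) := by
  obtain ⟨u, hu, z, ⟨c, hc⟩, p, hp, hmat⟩ := hg
  set v : Fin n → F := ((g⁻¹ : GL (Fin n) F) : Matrix (Fin n) (Fin n) F) (lastIdx n) with hv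
  have step1 : v ᵥ* ((u : Matrix (Fin n) (Fin n) F) * wAnti F n * wBlockMat F n m *
      (z : Matrix (Fin n) (Fin n) F)) = Pi.single (lastIdx n) 1 := by
    have e1 : (v ᵥ* ((u : Matrix (Fin n) (Fin n) F) * wAnti F n * wBlockMat F n m *
        (z : Matrix (Fin n) (Fin n) F))) ᵥ* (p : Matrix (Fin n) (Fin n) F) =
        Pi.single (lastIdx n) 1 := by
      rw [Matrix.vecMul_vecMul, ← hmat]
      exact inv_row_vecMul g
    have e4 : ((v ᵥ* ((u : Matrix (Fin n) (Fin n) F) * wAnti F n * wBlockMat F n m *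
        (z : Matrix (Fin n) (Fin n) F))) ᵥ* (p : Matrix (Fin n) (Fin n) F)) ᵥ*
        ((p⁻¹ : GL (Fin n) F) : Matrix (Fin n) (Fin n) F) =
        v ᵥ* ((u : Matrix (Fin n) (Fin n) F) * wAnti F n * wBlockMat F n m *
        (z : Matrix (Fin n) (Fin n) F)) := by
      rw [Matrix.vecMul_vecMul (v ᵥ* _), Units.mul_inv, Matrix.vecMul_one]
    rw [← e4, e1, single_vecMul_mirabolic_inv hp]
  have step2 : (v ᵥ* (u : Matrix (Fin n) (Fin n) F)) ᵥ* (wAnti F n * wBlockMat F n m) =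
      ((c : F)⁻¹ : F) • (Pi.single (lastIdx n) 1 : Fin n → F) := by
    have e1 : v ᵥ* ((u : Matrix (Fin n) (Fin n) F) * (wAnti F n * wBlockMat F n m) *
        (z : Matrix (Fin n) (Fin n) F)) = Pi.single (lastIdx n) 1 := by
      rw [← mul_assoc]; exact step1
    rw [← Matrix.vecMul_vecMul, ← Matrix.vecMul_vecMul, hc, vecMul_smul_one] at e1
    rw [← e1, smul_smul, inv_mul_cancel₀ (Units.ne_zero c), one_smul]
  have step3 : v ᵥ* (u : Matrix (Fin n) (Fin n) F) =
      (fun j : Fin n => if (j : ℕ) = n - 1 - m then ((c : F)⁻¹ : F) else 0) := by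
    have e2 := congrArg (fun w => w ᵥ* (wAnti F n * wBlockMat F n m)ᵀ) step2
    simp only [Matrix.vecMul_vecMul] at e2
    rw [mul_assoc ((u : Matrix (Fin n) (Fin n) F)), WB_mul_transpose hm1 hm2, mul_one] at e2
    rw [e2]
    funext j
    rw [Matrix.smul_vecMul, Pi.smul_apply, Matrix.single_one_vecMul, Matrix.row,
      Matrix.transpose_apply, WB_col_last hm1 hm2]
    simp only [smul_eq_mul]
    split_ifs <;> simp
  have hsupp : ∀ j : Fin n, j ≠ (⟨n - 1 - m, by have := npos (n := n); omega⟩ : Fin n) →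
      (v ᵥ* (u : Matrix (Fin n) (Fin n) F)) j = 0 := by
    intro j hj
    rw [step3]
    exact if_neg (fun h => hj (Fin.ext h))
  obtain ⟨hzero, hval⟩ := vecMul_unip_support hu.1 hu.2 hsupp
  constructor
  · intro j hj
    exact hzero j (by rw [Fin.lt_def]; exact hj)
  · intro j hj
    have hjeq : j = (⟨n - 1 - m, by have := npos (n := n); omega⟩ : Fin n) := Fin.ext hj
    rw [hjeq, hval, step3]
    simp only [Fin.val_mk, if_pos rfl]
    exact inv_ne_zero (Units.ne_zero c)

/-- coverage -/
lemma cover (g : GL (Fin n) F) :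
    g ∈ cellZero F n ∨ ∃ m, 1 ≤ m ∧ m ≤ n - 1 ∧ g ∈ cellMid F n m := by
  classical
  set v : Fin n → F := ((g⁻¹ : GL (Fin n) F) : Matrix (Fin n) (Fin n) F) (lastIdx n) with hv
  have hvg : v ᵥ* (g : Matrix (Fin n) (Fin n) F) = Pi.single (lastIdx n) 1 :=
    inv_row_vecMul g
  have hvne : ∃ j, v j ≠ 0 := by
    by_contra h
    push_neg at h
    have hv0 : v = 0 := by funext j; exact h j
    rw [hv0, Matrix.zero_vecMul] at hvg
    have h0 := congrFun hvg (lastIdx n)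
    simp at h0
  set S : Finset (Fin n) := Finset.univ.filter (fun j => v j ≠ 0) with hS
  have hSne : S.Nonempty := by
    obtain ⟨j, hj⟩ := hvne
    exact ⟨j, by simp [hS, hj]⟩
  set t : Fin n := S.min' hSne with ht
  have hvt : v t ≠ 0 := by
    have := S.min'_mem hSne
    simp only [hS, Finset.mem_filter] at this
    exact this.2
  have hlow : ∀ j : Fin n, j < t → v j = 0 := by
    intro j hj
    by_contra hne
    exact absurd (S.min'_le j (by simp [hS, hne])) (not_le.mpr hj)
  have htlt := t.isLt
  set z : GL (Fin n) F := ⟨((v t)⁻¹ : F) • 1, (v t) • 1,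
    by rw [Matrix.smul_mul, Matrix.mul_smul, smul_smul, mul_one,
      inv_mul_cancel₀ hvt, one_smul],
    by rw [Matrix.smul_mul, Matrix.mul_smul, smul_smul, mul_one,
      mul_inv_cancel₀ hvt, one_smul]⟩ with hz
  have hzmem : z ∈ centerSet F n := ⟨Units.mk0 (v t)⁻¹ (inv_ne_zero hvt), rfl⟩
  have hzinv : ((z⁻¹ : GL (Fin n) F) : Matrix (Fin n) (Fin n) F) = (v t) • 1 := rfl
  by_cases hcase : (t : ℕ) = n - 1
  -- zero cell
  · left
    have hteq : t = lastIdx n := by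
      apply Fin.ext; show (t : ℕ) = n - 1; exact hcase
    have hvform : (v t) • (Pi.single (lastIdx n) 1 : Fin n → F) = v := by
      funext j
      rw [Pi.smul_apply, Pi.single_apply]
      by_cases hj : j = lastIdx n
      · rw [if_pos hj, smul_eq_mul, mul_one, hj, hteq]
      · rw [if_neg hj, smul_zero]
        refine (hlow j ?_).symm
        rw [Fin.lt_def, hcase]
        have hjl := j.isLt
        have : (j : ℕ) ≠ n - 1 := fun h => hj (Fin.ext h)
        omega
    refine ⟨z, hzmem, z⁻¹ * g, ?_, (mul_inv_cancel_left z g).symm⟩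
    intro j
    have hrow : ((z⁻¹ * g : GL (Fin n) F) : Matrix (Fin n) (Fin n) F) (lastIdx n)
        = Pi.single (lastIdx n) 1 := by
      change Matrix.row ((z⁻¹ * g : GL (Fin n) F) : Matrix (Fin n) (Fin n) F) (lastIdx n) = _
      rw [← Matrix.single_one_vecMul (lastIdx n)
          ((z⁻¹ * g : GL (Fin n) F) : Matrix (Fin n) (Fin n) F)]
      rw [Units.val_mul, ← Matrix.vecMul_vecMul, hzinv, vecMul_smul_one, hvform, hvg]
    rw [congrFun hrow j, Pi.single_apply]
  -- middle cell
  · right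
    set m : ℕ := n - 1 - (t : ℕ) with hm
    have hm1 : 1 ≤ m := by omega
    have hm2 : m ≤ n - 1 := by omega
    refine ⟨m, hm1, hm2, ?_⟩
    set a : Fin n → F := fun j => -(v j / v t) with ha
    set u : GL (Fin n) F := rowAddUnit t a with hu
    have key1 : v ᵥ* (u : Matrix (Fin n) (Fin n) F) = Pi.single t (v t) := by
      funext j
      rw [hu, vecMul_rowAddUnit, Pi.single_apply]
      by_cases hjt : j = t
      · rw [if_pos hjt, if_neg (by rw [hjt]; exact lt_irrefl t), mul_zero, add_zero, hjt]
      · rw [if_neg hjt]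
        rcases lt_or_gt_of_ne (fun h => hjt (Fin.ext h) : (j:ℕ) ≠ (t:ℕ)) with hlt | hgt
        · rw [if_neg (by rw [Fin.lt_def]; omega), mul_zero, add_zero]
          exact hlow j (by rwa [Fin.lt_def])
        · rw [if_pos (by rwa [Fin.lt_def]), ha]
          simp only
          rw [mul_neg, mul_comm, div_mul_cancel₀ _ hvt, add_neg_cancel]
    set W : Matrix (Fin n) (Fin n) F := wAnti F n * wBlockMat F n m with hW
    set WBu : GL (Fin n) F := ⟨W, Wᵀ, WB_mul_transpose hm1 hm2, transpose_mul_WB hm1 hm2⟩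
      with hWBu
    set p : GL (Fin n) F := (u * WBu * z)⁻¹ * g with hp
    have hprod : u * WBu * z * p = g := mul_inv_cancel_left _ g
    have hWBuv : (WBu : Matrix (Fin n) (Fin n) F) = W := rfl
    have hvalW : (u : Matrix (Fin n) (Fin n) F) * W * (z : Matrix (Fin n) (Fin n) F) *
        (p : Matrix (Fin n) (Fin n) F) = (g : Matrix (Fin n) (Fin n) F) := by
      rw [← hWBuv, ← Units.val_mul u WBu, ← Units.val_mul (u * WBu) z,
        ← Units.val_mul (u * WBu * z) p, hprod]
    have key3 : v ᵥ* ((u : Matrix (Fin n) (Fin n) F) * W * (z : Matrix (Fin n) (Fin n) F))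
        = Pi.single (lastIdx n) 1 := by
      rw [← Matrix.vecMul_vecMul, ← Matrix.vecMul_vecMul, key1]
      have e : Pi.single t (v t) ᵥ* W =
          (fun j : Fin n => v t * (if (j:ℕ) = n - 1 then 1 else 0)) := by
        rw [Matrix.single_vecMul]
        funext j
        rw [Pi.smul_apply, Matrix.row, smul_eq_mul, hW, WB_apply hm1 hm2]
        congr 2
        simp only [eq_iff_iff, sig]
        rw [if_pos (by omega)]
        omega
      rw [e]
      have hzc : (z : Matrix (Fin n) (Fin n) F) = ((v t)⁻¹ : F) • 1 := rfl
      rw [hzc, vecMul_smul_one]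
      funext j
      rw [Pi.smul_apply, Pi.single_apply]
      simp only [smul_eq_mul]
      by_cases hj : j = lastIdx n
      · rw [if_pos (show (j:ℕ) = n - 1 from by rw [hj]; rfl), if_pos hj, mul_one,
          inv_mul_cancel₀ hvt]
      · have hjn : ¬((j : ℕ) = n - 1) := fun h => hj (by
          apply Fin.ext; show (j : ℕ) = ((lastIdx n : Fin n) : ℕ); exact h)
        rw [if_neg hjn, if_neg hj, mul_zero, mul_zero]
    refine ⟨u, rowAddUnit_mem t a, z, hzmem, p, ?_, ?_⟩
    · intro j
      have hrow : (p : Matrix (Fin n) (Fin n) F) (lastIdx n) = Pi.single (lastIdx n) 1 :=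
        calc (p : Matrix (Fin n) (Fin n) F) (lastIdx n)
            = Pi.single (lastIdx n) (1:F) ᵥ* (p : Matrix (Fin n) (Fin n) F) :=
              (Matrix.single_one_vecMul _ _).symm
          _ = (v ᵥ* ((u : Matrix (Fin n) (Fin n) F) * W * (z : Matrix (Fin n) (Fin n) F))) ᵥ*
              (p : Matrix (Fin n) (Fin n) F) := by rw [key3]
          _ = v ᵥ* ((u : Matrix (Fin n) (Fin n) F) * W * (z : Matrix (Fin n) (Fin n) F) *
              (p : Matrix (Fin n) (Fin n) F)) := Matrix.vecMul_vecMul _ _ _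
          _ = v ᵥ* (g : Matrix (Fin n) (Fin n) F) := by rw [hvalW]
          _ = Pi.single (lastIdx n) 1 := hvg
      rw [congrFun hrow j, Pi.single_apply]
    · rw [← hvalW, hW, ← mul_assoc ((u : Matrix (Fin n) (Fin n) F)) (wAnti F n)
        (wBlockMat F n m)]

end Chen

/-- Chen's double coset decomposition:
`GL_n(F) = Z_n P_n ⊔ ⊔_{m=1}^{n-1} N_n w_n w_{m,n-m} Z_n P_n`,
i.e. these cells cover `GL_n(F)` and are pairwise disjoint. -/
theorem chen_decomposition :
    (Set.univ : Set (GL (Fin n) F)) =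
      cellZero F n ∪ (⋃ m ∈ Finset.Icc 1 (n - 1), cellMid F n m) ∧
    (∀ m ∈ Finset.Icc 1 (n - 1), Disjoint (cellZero F n) (cellMid F n m)) ∧
    (∀ m ∈ Finset.Icc 1 (n - 1), ∀ m' ∈ Finset.Icc 1 (n - 1), m ≠ m' →
      Disjoint (cellMid F n m) (cellMid F n m')) := by
  refine ⟨?_, ?_, ?_⟩
  · apply Set.eq_of_subset_of_subset
    · intro g _
      rcases Chen.cover g with h | ⟨m, hm1, hm2, h⟩
      · exact Set.mem_union_left _ h
      · refine Set.mem_union_right _ ?_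
        simp only [Set.mem_iUnion]
        exact ⟨m, Finset.mem_Icc.mpr ⟨hm1, hm2⟩, h⟩
    · exact Set.subset_univ _
  · intro m hm
    rw [Finset.mem_Icc] at hm
    rw [Set.disjoint_left]
    intro g hg0 hgm
    have hn := Chen.npos (n := n)
    have h1 := Chen.cellZero_inv_row hg0
    have h2 := (Chen.cellMid_inv_row hm.1 hm.2 hgm).2
    have hne : (⟨n - 1 - m, by omega⟩ : Fin n) ≠ lastIdx n := by
      intro h
      have h3 := congrArg Fin.val h
      simp only [Fin.val_mk] at h3
      have h4 : (lastIdx n : Fin n).val = n - 1 := rfl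
      omega
    exact h2 ⟨n - 1 - m, by omega⟩ rfl (h1 _ hne)
  · intro m hm m' hm' hnem
    rw [Finset.mem_Icc] at hm hm'
    rw [Set.disjoint_left]
    intro g hg hg'
    have hn := Chen.npos (n := n)
    have A := Chen.cellMid_inv_row hm.1 hm.2 hg
    have B := Chen.cellMid_inv_row hm'.1 hm'.2 hg'
    rcases Nat.lt_or_ge (n - 1 - m) (n - 1 - m') with h | h
    · exact A.2 ⟨n - 1 - m, by omega⟩ rfl
        (B.1 ⟨n - 1 - m, by omega⟩ (by simp only [Fin.val_mk]; omega))
    · have h' : n - 1 - m' < n - 1 - m := by omega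
      exact B.2 ⟨n - 1 - m', by omega⟩ rfl
        (A.1 ⟨n - 1 - m', by omega⟩ (by simp only [Fin.val_mk]; omega))
end

section
/- Let G be a group, H a subgroup, A a commutative ring, and V an A[H]-module. For any commutative A-algebra R, there is a natural R[G]-module isomorphism ind_H^G(V ⊗_A R) ≅ (ind_H^G V) ⊗_A R, where ind_H^G denotes functions f : G → V with f(hg) = h·f(g) supported on finitely many right H-cosets, with G acting by right translation. -/
open scoped TensorProduct Classical

section Ind

variable (A : Type*) [CommRing A] (G : Type*) [Group G] (H : Subgroup G)
variable (V : Type*) [AddCommGroup V] [Module A V]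

/-- Compact induction `ind_H^G V`: functions `f : G → V` with `f(hg) = h · f(g)`
which are supported on finitely many right cosets `Hg`, as an `A`-submodule of `G → V`.
Here the `A`-linear action of `H` on `V` is recorded by `ρ : H →* (V →ₗ[A] V)`. -/
def IndCarrier (ρ : H →* (V →ₗ[A] V)) : Submodule A (G → V) where
  carrier := {f | (∀ (h : H) (g : G), f ((h : G) * g) = ρ h (f g)) ∧
    ∃ s : Finset G, ∀ g : G, f g ≠ 0 → ∃ (h : H) (g₀ : G), g₀ ∈ s ∧ g = (h : G) * g₀}
  zero_mem' := by
    refine ⟨fun h g => by simp, ⟨∅, fun g hg => absurd rfl hg⟩⟩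
  add_mem' := by
    rintro a b ⟨ha1, sa, ha2⟩ ⟨hb1, sb, hb2⟩
    refine ⟨fun h g => by simp [ha1, hb1], ⟨sa ∪ sb, fun g hg => ?_⟩⟩
    by_cases hag : a g ≠ 0
    · obtain ⟨h, g₀, hg₀, rfl⟩ := ha2 g hag
      exact ⟨h, g₀, Finset.mem_union_left _ hg₀, rfl⟩
    · have hbg : b g ≠ 0 := by
        intro hb0
        exact hg (by simp [Pi.add_apply, hb0, not_not.mp hag])
      obtain ⟨h, g₀, hg₀, rfl⟩ := hb2 g hbg
      exact ⟨h, g₀, Finset.mem_union_right _ hg₀, rfl⟩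
  smul_mem' := by
    rintro c f ⟨hf1, s, hf2⟩
    refine ⟨fun h g => by simp [hf1], ⟨s, fun g hg => ?_⟩⟩
    have : f g ≠ 0 := by
      intro h0
      exact hg (by simp [Pi.smul_apply, h0])
    exact hf2 g this

/-- Right translation by `g₀ ∈ G` on compact induction, the `G`-action on `ind_H^G V`. -/
def indTranslate (ρ : H →* (V →ₗ[A] V)) (g₀ : G) :
    ↥(IndCarrier A G H V ρ) →ₗ[A] ↥(IndCarrier A G H V ρ) where
  toFun f := ⟨fun x => (f : G → V) (x * g₀), by
    obtain ⟨h1, s, h2⟩ := f.2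
    refine ⟨fun h g => by simpa [mul_assoc] using h1 h (g * g₀), ⟨s.image (· * g₀⁻¹), ?_⟩⟩
    intro g hg
    obtain ⟨h, g₁, hg₁, hgg⟩ := h2 (g * g₀) hg
    refine ⟨h, g₁ * g₀⁻¹, Finset.mem_image_of_mem _ hg₁, ?_⟩
    rw [← mul_assoc, ← hgg, mul_assoc, mul_inv_cancel, mul_one]⟩
  map_add' f f' := Subtype.ext (funext fun x => rfl)
  map_smul' c f := Subtype.ext (funext fun x => rfl)

end Ind


noncomputable section IndAux

variable {B : Type*} [CommRing B] {G : Type*} [Group G] {H : Subgroup G}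
variable {W : Type*} [AddCommGroup W] [Module B W]

/-- Index type: right cosets `Hg`. -/
abbrev IndIdx (G : Type*) [Group G] (H : Subgroup G) := Quotient (QuotientGroup.rightRel H)

/-- Projection to the right-coset space. -/
def indMk (H : Subgroup G) (g : G) : IndIdx G H := Quotient.mk (QuotientGroup.rightRel H) g

lemma indMk_out (q : IndIdx G H) : indMk H q.out = q := Quotient.out_eq q

lemma ind_out_rel (g : G) : g * ((indMk H g).out)⁻¹ ∈ H := by
  have h : indMk H ((indMk H g).out) = indMk H g := indMk_out _
  exact QuotientGroup.rightRel_apply.mp (Quotient.exact h)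

/-- The `H`-part of `g` relative to the chosen coset representative. -/
def indH (H : Subgroup G) (g : G) : H := ⟨g * ((indMk H g).out)⁻¹, ind_out_rel g⟩

lemma indH_spec (g : G) : ((indH H g : G)) * (indMk H g).out = g := by
  show g * ((indMk H g).out)⁻¹ * (indMk H g).out = g
  rw [inv_mul_cancel_right]

lemma indMk_h_mul (h : H) (g : G) : indMk H ((h : G) * g) = indMk H g := by
  apply Quotient.sound
  refine QuotientGroup.rightRel_apply.mpr ?_
  rw [mul_inv_rev, ← mul_assoc, mul_inv_cancel, one_mul]
  exact H.inv_mem h.2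

lemma indH_h_mul (h : H) (g : G) : indH H ((h : G) * g) = h * indH H g := by
  apply Subtype.ext
  show ((h : G) * g) * ((indMk H ((h : G) * g)).out)⁻¹ = (h : G) * (g * ((indMk H g).out)⁻¹)
  rw [indMk_h_mul, mul_assoc]

lemma indH_out (q : IndIdx G H) : indH H q.out = 1 := by
  apply Subtype.ext
  show q.out * ((indMk H q.out).out)⁻¹ = 1
  rw [indMk_out, mul_inv_cancel]

variable (σ : H →* (W →ₗ[B] W))

lemma ind_equiv (f : ↥(IndCarrier B G H W σ)) (h : H) (g : G) :
    (f : G → W) ((h : G) * g) = σ h ((f : G → W) g) := f.2.1 h g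

lemma ind_supp (f : ↥(IndCarrier B G H W σ)) :
    ∃ s : Finset G, ∀ g : G, (f : G → W) g ≠ 0 →
      ∃ (h : H) (g₀ : G), g₀ ∈ s ∧ g = (h : G) * g₀ := f.2.2

/-- Evaluate at coset representatives. -/
def indToFinsupp : ↥(IndCarrier B G H W σ) →ₗ[B] (IndIdx G H →₀ W) where
  toFun f := Finsupp.onFinset ((ind_supp σ f).choose.image (indMk H))
    (fun q => (f : G → W) q.out)
    (fun q hq => by
      obtain ⟨h, g₀, hg₀, hq2⟩ := (ind_supp σ f).choose_spec q.out hq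
      refine Finset.mem_image.mpr ⟨g₀, hg₀, ?_⟩
      calc indMk H g₀ = indMk H ((h : G) * g₀) := (indMk_h_mul h g₀).symm
        _ = indMk H q.out := by rw [← hq2]
        _ = q := indMk_out q)
  map_add' f f' := Finsupp.ext fun q => by
    simp [Finsupp.onFinset_apply]
  map_smul' c f := Finsupp.ext fun q => by
    simp [Finsupp.onFinset_apply]

/-- Spread a finsupp on cosets out to an equivariant function. -/
def finsuppToInd : (IndIdx G H →₀ W) →ₗ[B] ↥(IndCarrier B G H W σ) where
  toFun φ := ⟨fun g => σ (indH H g) (φ (indMk H g)), by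
    constructor
    · intro h g
      show σ (indH H ((h : G) * g)) (φ (indMk H ((h : G) * g))) =
        σ h (σ (indH H g) (φ (indMk H g)))
      rw [indMk_h_mul, indH_h_mul, map_mul]
      rfl
    · refine ⟨φ.support.image Quotient.out, fun g hg => ?_⟩
      have hφ : φ (indMk H g) ≠ 0 := fun h0 => hg (by
        show σ (indH H g) (φ (indMk H g)) = 0
        rw [h0, map_zero])
      exact ⟨indH H g, (indMk H g).out,
        Finset.mem_image.mpr ⟨indMk H g, Finsupp.mem_support_iff.mpr hφ, rfl⟩,
        (indH_spec g).symm⟩⟩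
  map_add' φ ψ := Subtype.ext (funext fun g => by simp)
  map_smul' c φ := Subtype.ext (funext fun g => by simp)

/-- Compact induction is isomorphic to finitely supported functions on `H\\G`. -/
def indFinsuppEquiv : ↥(IndCarrier B G H W σ) ≃ₗ[B] (IndIdx G H →₀ W) :=
  LinearEquiv.ofLinear (indToFinsupp σ) (finsuppToInd σ)
    (by
      apply LinearMap.ext; intro φ
      apply Finsupp.ext; intro q
      show σ (indH H q.out) (φ (indMk H q.out)) = φ q
      rw [indH_out, indMk_out, map_one]
      rfl)
    (by
      apply LinearMap.ext; intro f
      apply Subtype.ext; funext g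
      show σ (indH H g) ((f : G → W) (indMk H g).out) = (f : G → W) g
      rw [← ind_equiv σ f (indH H g) (indMk H g).out, indH_spec])

end IndAux

lemma finsuppRight_smul'' {A : Type*} [CommRing A] {R : Type*} [CommRing R] [Algebra A R]
    {V : Type*} [AddCommGroup V] [Module A V] {ι : Type*}
    [DecidableEq ι] (r : R) (t : R ⊗[A] (ι →₀ V)) :
    TensorProduct.finsuppRight A A R V ι (r • t) = r • TensorProduct.finsuppRight A A R V ι t := by
  induction t with
  | zero => simp
  | add x y hx hy => simp [smul_add, hx, hy]
  | tmul x p =>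
    ext q
    simp [TensorProduct.smul_tmul', TensorProduct.finsuppRight_apply_tmul_apply]

/-- `R`-linear version of `TensorProduct.finsuppRight`. -/
noncomputable def finsuppRightR (A : Type*) [CommRing A] (R : Type*) [CommRing R] [Algebra A R]
    (V : Type*) [AddCommGroup V] [Module A V] (ι : Type*) [DecidableEq ι] :
    R ⊗[A] (ι →₀ V) ≃ₗ[R] (ι →₀ R ⊗[A] V) where
  __ := TensorProduct.finsuppRight A A R V ι
  map_smul' := finsuppRight_smul''

lemma finsuppRightR_apply {A : Type*} [CommRing A] {R : Type*} [CommRing R] [Algebra A R]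
    {V : Type*} [AddCommGroup V] [Module A V] {ι : Type*} [DecidableEq ι]
    (x : R ⊗[A] (ι →₀ V)) :
    finsuppRightR A R V ι x = TensorProduct.finsuppRight A A R V ι x := rfl

set_option maxHeartbeats 1000000 in
set_option synthInstance.maxHeartbeats 400000 in
/-- For `G` a group, `H ≤ G`, `A` a commutative ring, `V` an `A[H]`-module and `R` a
commutative `A`-algebra, there is a natural `R[G]`-module isomorphism
`ind_H^G (V ⊗_A R) ≅ (ind_H^G V) ⊗_A R` (base change written here as `R ⊗[A] -`):
an `R`-linear isomorphism sending the function `g ↦ f(g) ⊗ r` to `f ⊗ r` and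
commuting with the right translation action of `G` on both sides. -/
theorem indCarrier_baseChange
    (A : Type*) [CommRing A] (G : Type*) [Group G] (H : Subgroup G)
    (V : Type*) [AddCommGroup V] [Module A V] (ρ : H →* (V →ₗ[A] V))
    (R : Type*) [CommRing R] [Algebra A R]
    (ρR : H →* ((R ⊗[A] V) →ₗ[R] (R ⊗[A] V)))
    (hρR : ∀ (h : H) (r : R) (v : V), ρR h (r ⊗ₜ[A] v) = r ⊗ₜ[A] (ρ h v)) :
    ∃ e : ↥(IndCarrier R G H (R ⊗[A] V) ρR) ≃ₗ[R] R ⊗[A] ↥(IndCarrier A G H V ρ),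
      (∀ (r : R) (f : ↥(IndCarrier A G H V ρ)) (g : G),
        ((e.symm (r ⊗ₜ[A] f) : ↥(IndCarrier R G H (R ⊗[A] V) ρR)) : G → R ⊗[A] V) g =
          r ⊗ₜ[A] ((f : G → V) g)) ∧
      (∀ (g₀ : G) (f : ↥(IndCarrier R G H (R ⊗[A] V) ρR)),
        e (indTranslate R G H (R ⊗[A] V) ρR g₀ f) =
          (LinearMap.baseChange R (indTranslate A G H V ρ g₀)) (e f))  := by
  classical
  have mem : ∀ (r : R) (f : ↥(IndCarrier A G H V ρ)),
      (fun g => r ⊗ₜ[A] (f : G → V) g) ∈ IndCarrier R G H (R ⊗[A] V) ρR := by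
    intro r f
    constructor
    · intro h g
      show r ⊗ₜ[A] ((f : G → V) ((h : G) * g)) = ρR h (r ⊗ₜ[A] (f : G → V) g)
      rw [hρR, ind_equiv ρ f h g]
    · obtain ⟨s, hs⟩ := ind_supp ρ f
      exact ⟨s, fun g hg => hs g (fun h0 => hg (by
        show r ⊗ₜ[A] ((f : G → V) g) = 0
        rw [h0, TensorProduct.tmul_zero]))⟩
  set e : ↥(IndCarrier R G H (R ⊗[A] V) ρR) ≃ₗ[R] R ⊗[A] ↥(IndCarrier A G H V ρ) :=
    (indFinsuppEquiv ρR).trans (((finsuppRightR A R V (IndIdx G H)).symm).trans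
      (LinearEquiv.baseChange A R _ _ (indFinsuppEquiv ρ).symm)) with he
  have key : ∀ (r : R) (f : ↥(IndCarrier A G H V ρ)),
      e.symm (r ⊗ₜ[A] f) = ⟨fun g => r ⊗ₜ[A] (f : G → V) g, mem r f⟩ := by
    intro r f
    rw [LinearEquiv.symm_apply_eq, he]
    simp only [LinearEquiv.trans_apply]
    have h1 : (indFinsuppEquiv ρR) ⟨fun g => r ⊗ₜ[A] (f : G → V) g, mem r f⟩ =
        finsuppRightR A R V (IndIdx G H) (r ⊗ₜ[A] (indFinsuppEquiv ρ f)) := by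
      apply Finsupp.ext; intro q
      rw [finsuppRightR_apply, TensorProduct.finsuppRight_apply_tmul_apply]
      rfl
    rw [h1, LinearEquiv.symm_apply_apply]
    show r ⊗ₜ[A] f = LinearEquiv.baseChange A R _ _ (indFinsuppEquiv ρ).symm
      (r ⊗ₜ[A] (indFinsuppEquiv ρ f))
    rw [LinearEquiv.baseChange, TensorProduct.AlgebraTensorModule.congr_tmul,
      LinearEquiv.refl_apply, LinearEquiv.symm_apply_apply]
  refine ⟨e, fun r f g => by rw [key], ?_⟩
  have symm_comm : ∀ (g₀ : G) (x : R ⊗[A] ↥(IndCarrier A G H V ρ)),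
      e.symm ((LinearMap.baseChange R (indTranslate A G H V ρ g₀)) x) =
        indTranslate R G H (R ⊗[A] V) ρR g₀ (e.symm x) := by
    intro g₀ x
    induction x with
    | zero => simp
    | add x y hx hy => simp [map_add, hx, hy]
    | tmul r f =>
      rw [LinearMap.baseChange_tmul, key, key]
      apply Subtype.ext; funext g
      rfl
  intro g₀ f
  have h := symm_comm g₀ (e f)
  rw [LinearEquiv.symm_apply_apply] at h
  rw [← h, LinearEquiv.apply_symm_apply]
end

section
/- Let A be a commutative ring, F a nonarchimedean local field, ψ : F → A^× an additive character such that ψ(x) - 1 is a unit in A whenever val(x) is sufficiently negative. Let W : GL_{n}(F) → A be a smooth function satisfying W(ug) = ψ(Σ u_{i,i+1}) W(g) for all upper unipotent u, where smooth means right-invariant under some compact open subgroup. Then for each l ∈ ℤ, the restriction of W to the set of diagonal matrices diag(a_1,...,a_{n-1},1) with Σ val(a_i) = l is supported on a set where the differences val(a_i) - val(a_{i+1}) are bounded above by a constant depending only on W. -/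
open Matrix

lemma diag_mul_elem_aux (F : Type*) [Field F] (m : ℕ) (f : Fin m → F) (p q : Fin m)
    (hpq : p ≠ q) (hq : f q ≠ 0) (x : F) :
    diagonal f * (1 + x • Matrix.single p q 1) =
      (1 + (f p * x * (f q)⁻¹) • Matrix.single p q 1) * diagonal f := by
  ext a b
  simp only [Matrix.add_mul, Matrix.mul_add, Matrix.mul_one, Matrix.one_mul,
    Matrix.add_apply, Matrix.smul_apply, Matrix.mul_apply, diagonal, Matrix.single,
    of_apply]
  by_cases hab : a = p <;> by_cases hb : b = q <;>
    simp_all [Finset.sum_ite_eq, Finset.sum_ite_eq', Matrix.one_apply, eq_comm]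

/-- Support of Whittaker functions on a valuation slice: let `A` be a commutative ring,
`F` a (nonarchimedean local) field with multiplicative valuation `val`, and
`ψ : F → A` an additive character such that `ψ(x) - 1` is a unit whenever `val x` is
sufficiently negative.  Let `W : GL_{n+1}(F) → A` (here defined on matrices) be a smooth
function satisfying `W(ug) = ψ(∑ u_{i,i+1}) W(g)` for all upper unipotent `u`, where
smooth means right-invariance under the elementary unipotent matrices
`1 + x E_{i,i+1}` for `val x` large.  Then there is `r ∈ ℤ` such that
`W(diag(a_1,…,a_n,1)) = 0` unless `val(a_i) - val(a_{i+1}) ≥ r` for all `i`. -/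
theorem whittaker_support_bounded
    (A : Type*) [CommRing A] (F : Type*) [Field F] (n : ℕ)
    (val : F → ℤ)
    (hval : ∀ x y : F, x ≠ 0 → y ≠ 0 → val (x * y) = val x + val y)
    (ψ : F → A)
    (hψadd : ∀ x y : F, ψ (x + y) = ψ x * ψ y)
    (hψu : ∃ c₀ : ℤ, ∀ x : F, x ≠ 0 → val x < c₀ → IsUnit (ψ x - 1))
    (W : Matrix (Fin (n + 1)) (Fin (n + 1)) F → A)
    (hW : ∀ u g : Matrix (Fin (n + 1)) (Fin (n + 1)) F,
      ((∀ i j : Fin (n + 1), j < i → u i j = 0) ∧ ∀ i : Fin (n + 1), u i i = 1) →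
      W (u * g) = ψ (∑ i : Fin n, u i.castSucc i.succ) * W g)
    (hWsmooth : ∃ e : ℤ, ∀ (g : Matrix (Fin (n + 1)) (Fin (n + 1)) F) (i : Fin n)
      (x : F), x ≠ 0 → e ≤ val x →
      W (g * (1 + x • Matrix.single i.castSucc i.succ (1 : F))) = W g) :
    ∃ r : ℤ, ∀ a : Fin n → Fˣ,
      W (Matrix.diagonal fun j : Fin (n + 1) =>
          if h : (j : ℕ) < n then ((a ⟨j, h⟩ : Fˣ) : F) else 1) ≠ 0 →
      ∀ (i : Fin n) (h : (i : ℕ) + 1 < n),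
        r ≤ val (a i : F) - val ((a ⟨(i : ℕ) + 1, h⟩ : Fˣ) : F) := by
  obtain ⟨c₀, hc⟩ := hψu
  obtain ⟨e, he⟩ := hWsmooth
  -- val 1 = 0
  have val1 : val 1 = 0 := by
    have := hval 1 1 one_ne_zero one_ne_zero
    simp at this; omega
  have valinv : ∀ x : F, x ≠ 0 → val x⁻¹ = - val x := by
    intro x hx
    have := hval x x⁻¹ hx (inv_ne_zero hx)
    rw [mul_inv_cancel₀ hx, val1] at this
    omega
  -- Core vanishing claim
  have key : ∀ (a : Fin n → Fˣ) (i : Fin n) (h : (i : ℕ) + 1 < n) (t : F),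
      t ≠ 0 → val t < c₀ →
      e ≤ val t - (val (a i : F) - val ((a ⟨(i : ℕ) + 1, h⟩ : Fˣ) : F)) →
      W (Matrix.diagonal fun j : Fin (n + 1) =>
          if h : (j : ℕ) < n then ((a ⟨j, h⟩ : Fˣ) : F) else 1) = 0 := by
    intro a i h t ht htc hte
    set f : Fin (n + 1) → F := fun j =>
      if h : (j : ℕ) < n then ((a ⟨j, h⟩ : Fˣ) : F) else 1 with hf
    have hip : (i.castSucc : ℕ) < n := i.isLt
    have hfp : f i.castSucc = (a i : F) := by
      simp only [hf, Fin.coe_castSucc, dif_pos hip]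
    have hiq : ((i.succ : Fin (n+1)) : ℕ) < n := by
      simp [Fin.val_succ]; omega
    have hfq : f i.succ = ((a ⟨(i : ℕ) + 1, h⟩ : Fˣ) : F) := by
      simp only [hf, Fin.val_succ, dif_pos h]
    have hap : (a i : F) ≠ 0 := Units.ne_zero _
    have haq : ((a ⟨(i : ℕ) + 1, h⟩ : Fˣ) : F) ≠ 0 := Units.ne_zero _
    -- choose x so that the conjugated entry is t
    set x : F := (a i : F)⁻¹ * t * ((a ⟨(i : ℕ) + 1, h⟩ : Fˣ) : F) with hx
    have hx0 : x ≠ 0 := by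
      simp [hx, ht, hap, haq]
    have hvx : val x = val t - (val (a i : F) - val ((a ⟨(i : ℕ) + 1, h⟩ : Fˣ) : F)) := by
      rw [hx, hval _ _ (by simp [hap, ht]) haq, hval _ _ (inv_ne_zero hap) ht,
        valinv _ hap]
      ring
    -- the conjugated entry
    have hy : f i.castSucc * x * (f i.succ)⁻¹ = t := by
      rw [hfp, hfq, hx]
      field_simp
    have hpq : i.castSucc ≠ i.succ := (Fin.castSucc_lt_succ (i := i)).ne
    have hconj := diag_mul_elem_aux F (n+1) f i.castSucc i.succ hpq
      (by rw [hfq]; exact haq) x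
    rw [hy] at hconj
    -- unipotent upper triangular check
    have hup : (∀ a' b' : Fin (n + 1), b' < a' →
        (1 + t • Matrix.single i.castSucc i.succ (1:F)) a' b' = 0) ∧
        ∀ a' : Fin (n + 1),
        (1 + t • Matrix.single i.castSucc i.succ (1:F)) a' a' = 1 := by
      constructor
      · intro a' b' hba
        simp only [Matrix.add_apply, Matrix.smul_apply, Matrix.single, of_apply,
          Matrix.one_apply]
        have h1 : a' ≠ b' := hba.ne'
        have h2 : ¬(i.castSucc = a' ∧ i.succ = b') := by
          rintro ⟨rfl, rfl⟩
          exact absurd hba (not_lt.mpr (Fin.castSucc_lt_succ (i := i)).le)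
        simp [h1, h2]
      · intro a'
        simp only [Matrix.add_apply, Matrix.smul_apply, Matrix.single, of_apply,
          Matrix.one_apply]
        have h2 : ¬(i.castSucc = a' ∧ i.succ = a') := by
          rintro ⟨rfl, h'⟩
          exact hpq h'.symm
        simp [h2]
    have hsum : (∑ j : Fin n,
        (1 + t • Matrix.single i.castSucc i.succ (1:F)) j.castSucc j.succ) = t := by
      have : ∀ j : Fin n,
          (1 + t • Matrix.single i.castSucc i.succ (1:F)) j.castSucc j.succ
            = if i = j then t else 0 := by
        intro j
        simp only [Matrix.add_apply, Matrix.smul_apply, Matrix.single, of_apply,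
          Matrix.one_apply]
        have h1 : j.castSucc ≠ j.succ := (Fin.castSucc_lt_succ (i := j)).ne
        by_cases hij : i = j
        · subst hij; simp [h1]
        · have h2 : ¬(i.castSucc = j.castSucc ∧ i.succ = j.succ) := by
            rintro ⟨hc', -⟩
            exact hij (Fin.castSucc_injective _ hc')
          simp [h1, h2]
      rw [Finset.sum_congr rfl (fun j _ => this j)]
      simp
    -- put it together
    have hsmooth := he (diagonal f) i x hx0 (by omega)
    rw [hconj, hW _ _ hup, hsum] at hsmooth
    have : (ψ t - 1) * W (diagonal f) = 0 := by
      rw [sub_mul, one_mul, hsmooth, sub_self]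
    have hu := hc t ht htc
    obtain ⟨u, hu'⟩ := hu
    have := congrArg (fun z => (↑u⁻¹ : A) * z) this
    simp only [mul_zero] at this
    rw [← mul_assoc, ← hu', Units.inv_mul, one_mul] at this
    exact this
  by_cases hex : ∃ t : F, t ≠ 0 ∧ val t < c₀
  · obtain ⟨t, ht0, htc⟩ := hex
    refine ⟨val t - e, fun a hWa i h => ?_⟩
    by_contra hlt
    push_neg at hlt
    exact hWa (key a i h t ht0 htc (by omega))
  · push_neg at hex
    refine ⟨c₀, fun a hWa i h => ?_⟩
    have hap : (a i : F) ≠ 0 := Units.ne_zero _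
    have haq : ((a ⟨(i : ℕ) + 1, h⟩ : Fˣ) : F) ≠ 0 := Units.ne_zero _
    have hz : (a i : F) * ((a ⟨(i : ℕ) + 1, h⟩ : Fˣ) : F)⁻¹ ≠ 0 := by
      simp [hap, haq]
    have := hex _ hz
    rw [hval _ _ hap (inv_ne_zero haq), valinv _ haq] at this
    omega
end
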